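/- Let n ≥ 2 and m ≥ 1 be natural numbers. For each i ∈ Fin n let v_i : Finset (Fin m) → ℝ, and let b : Fin n → Fin m → ℝ be nonnegative bids satisfying the no-overbidding condition: for all i and all S ⊆ Fin m, ∑_{j ∈ S} b(i,j) ≤ v_i(S). Let w : Fin m → Fin n satisfy b(w(j), j) ≥ b(i,j) for all i, j, and set X_i = {j : w(j) = i} and θ(i,j) = max_{i' ≠ i} b(i',j). Then for every pairwise disjoint family (S_1,…,S_n) of subsets of Fin m, ∑_{i} ∑_{j ∈ S_i} θ(i,j) ≤ ∑_{i} v_i(X_i). -/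

import Mathlib

/-- The threshold faced by player `i` on item `j`: the highest competing bid
`max_{i' ≠ i} b i' j` (well-defined since there are at least two players). -/
noncomputable def maxRival {n m : ℕ} (hn : 2 ≤ n) (b : Fin n → Fin m → ℝ)
    (i : Fin n) (j : Fin m) : ℝ :=
  (Finset.univ.erase i).sup'
    (by
      haveI : Nontrivial (Fin n) := Fin.nontrivial_iff_two_le.mpr hn
      obtain ⟨i', hi'⟩ := exists_ne i
      exact ⟨i', Finset.mem_erase.mpr ⟨hi', Finset.mem_univ _⟩⟩)
    (fun i' => b i' j)

lemma maxRival_le_winner {n m : ℕ} (hn : 2 ≤ n) (b : Fin n → Fin m → ℝ)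
    (w : Fin m → Fin n) (hw : ∀ (i : Fin n) (j : Fin m), b (w j) j ≥ b i j)
    (i : Fin n) (j : Fin m) : maxRival hn b i j ≤ b (w j) j := by
  apply Finset.sup'_le
  intro i' _
  exact hw i' j

/-- **SiSPAs with no-overbidding bidders are ex-post (0,1)-threshold covered:** for any
feasible (pairwise disjoint) allocation `S`, the sum of the players' threshold payments is at
most the social welfare of the realized allocation, where each item `j` goes to a highest
bidder `w j`. -/
theorem sispa_threshold_covered (n m : ℕ) (hn : 2 ≤ n) (hm : 1 ≤ m)
    (v : Fin n → Finset (Fin m) → ℝ)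
    (b : Fin n → Fin m → ℝ) (hb : ∀ i j, 0 ≤ b i j)
    (hnob : ∀ (i : Fin n) (S : Finset (Fin m)), ∑ j ∈ S, b i j ≤ v i S)
    (w : Fin m → Fin n) (hw : ∀ (i : Fin n) (j : Fin m), b (w j) j ≥ b i j) :
    ∀ S : Fin n → Finset (Fin m), (∀ i i', i ≠ i' → Disjoint (S i) (S i')) →
      ∑ i : Fin n, ∑ j ∈ S i, maxRival hn b i j ≤
        ∑ i : Fin n, v i (Finset.univ.filter (fun j => w j = i)) := by
  intro S hS
  have h1 : ∑ i : Fin n, ∑ j ∈ S i, maxRival hn b i j ≤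
      ∑ i : Fin n, ∑ j ∈ S i, b (w j) j := by
    refine Finset.sum_le_sum fun i _ => Finset.sum_le_sum fun j _ => ?_
    exact maxRival_le_winner hn b w hw i j
  have h2 : ∑ i : Fin n, ∑ j ∈ S i, b (w j) j ≤ ∑ j : Fin m, b (w j) j := by
    rw [← Finset.sum_biUnion (fun i _ i' _ h => hS i i' h)]
    apply Finset.sum_le_sum_of_subset_of_nonneg (Finset.subset_univ _)
    intro j _ _
    exact hb (w j) j
  have h3 : ∑ j : Fin m, b (w j) j =
      ∑ i : Fin n, ∑ j ∈ Finset.univ.filter (fun j => w j = i), b i j := by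
    rw [← Finset.sum_fiberwise Finset.univ w (fun j => b (w j) j)]
    refine Finset.sum_congr rfl fun i _ => Finset.sum_congr rfl fun j hj => ?_
    rw [(Finset.mem_filter.mp hj).2]
  have h4 : ∑ i : Fin n, ∑ j ∈ Finset.univ.filter (fun j => w j = i), b i j ≤
      ∑ i : Fin n, v i (Finset.univ.filter (fun j => w j = i)) :=
    Finset.sum_le_sum fun i _ => hnob i _
  linarith
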